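/- Let F be a finitely generated free group and φ ∈ Aut(F). Suppose there exists a constant K such that for every pair of exponents 0 ≤ i ≤ N and every w ∈ F, |φ^i(w)| ≤ K(|w| + |φ^N(w)|). Then for every conjugacy class, the same estimate holds for cyclic lengths up to a multiplicative constant: there exists K' with ‖φ^i(w)‖ ≤ K'(‖w‖ + ‖φ^N(w)‖) for all 0 ≤ i ≤ N, where ‖w‖ denotes the minimal word length among the conjugates of w. -/

import Mathlib

/-- The cyclic (conjugacy) length of `w`: minimal word length among conjugates of `w`. -/
noncomputable def cyclicNorm {B : Type} [DecidableEq B] (w : FreeGroup B) : ℕ :=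
  sInf {n | ∃ g : FreeGroup B, n = (g * w * g⁻¹).norm}

namespace Stmt11Aux

open FreeGroup List

variable {B : Type} [DecidableEq B]

/-- The "no cancellation" relation between adjacent letters. -/
def R : (B × Bool) → (B × Bool) → Prop := fun a b => ¬(a.1 = b.1 ∧ a.2 = !b.2)

instance : DecidableRel (R (B := B)) := fun _ _ => instDecidableNot

lemma reduce_eq_self_of_chain' {L : List (B × Bool)} (h : List.Chain' R L) :
    FreeGroup.reduce L = L := by
  induction L with
  | nil => rfl
  | cons x t ih =>
    have ht : FreeGroup.reduce t = t := ih h.tail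
    rw [FreeGroup.reduce.cons, ht]
    cases t with
    | nil => rfl
    | cons hd tl =>
      have hr : R x hd := (List.isChain_cons_cons.mp h).1
      simp only [R] at hr
      simp [hr]

lemma exists_cancel_of_not_chain' {L : List (B × Bool)} (h : ¬ List.Chain' R L) :
    ∃ (A : List (B × Bool)) (x : B) (b : Bool) (C : List (B × Bool)),
      L = A ++ (x, b) :: (x, !b) :: C := by
  induction L with
  | nil => exact absurd List.isChain_nil h
  | cons a t ih =>
    cases t with
    | nil => exact absurd (List.isChain_singleton a) h
    | cons c t2 =>
      change ¬ List.IsChain R (a :: c :: t2) at h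
      rw [List.isChain_cons_cons] at h
      push_neg at h
      by_cases hr : R a c
      · obtain ⟨A, x, b, C, hdec⟩ := ih (h hr)
        exact ⟨a :: A, x, b, C, by rw [hdec]; rfl⟩
      · simp only [R, not_not] at hr
        refine ⟨[], a.1, a.2, t2, ?_⟩
        have hc : c = (a.1, !a.2) := by
          cases c; cases a
          simp_all
        simp [hc]

lemma chain'_of_reduced {L : List (B × Bool)} (h : FreeGroup.reduce L = L) :
    List.Chain' R L := by
  by_contra hc
  obtain ⟨A, x, b, C, hdec⟩ := exists_cancel_of_not_chain' hc
  exact FreeGroup.reduce.not (by rw [h, hdec])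

lemma chain'_toWord (x : FreeGroup B) : List.Chain' R x.toWord :=
  chain'_of_reduced (FreeGroup.reduce_toWord x)

omit [DecidableEq B] in
/-- If `L ++ L` has no cancellation, neither does any power of `L`. -/
lemma chain'_flatten_replicate {L : List (B × Bool)} (h : List.Chain' R (L ++ L)) (n : ℕ) :
    List.Chain' R (List.flatten (List.replicate n L)) := by
  obtain ⟨hL, _, hjun⟩ := List.isChain_append.mp h
  induction n with
  | zero => exact List.isChain_nil
  | succ n ih =>
    rw [List.replicate_succ, List.flatten_cons]
    refine List.isChain_append.mpr ⟨hL, ih, ?_⟩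
    intro a ha y hy
    refine hjun a ha y ?_
    cases n with
    | zero => simp at hy
    | succ n =>
      rw [List.replicate_succ, List.flatten_cons] at hy
      cases L with
      | nil => simp at ha
      | cons u t => simpa using hy

lemma norm_pow_eq {x : FreeGroup B} (h : List.Chain' R (x.toWord ++ x.toWord)) (n : ℕ) :
    (x ^ n).norm = n * x.norm := by
  have h1 : x ^ n = FreeGroup.mk (List.flatten (List.replicate n x.toWord)) := by
    conv_lhs => rw [← FreeGroup.mk_toWord (x := x)]
    rw [FreeGroup.pow_mk]
  have h2 : (x ^ n).toWord = List.flatten (List.replicate n x.toWord) := by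
    rw [h1, FreeGroup.toWord_mk, reduce_eq_self_of_chain' (chain'_flatten_replicate h n)]
  rw [FreeGroup.norm, h2]
  simp [FreeGroup.norm, List.length_flatten, Function.comp_def, mul_comm]

lemma cyclicNorm_le (x g : FreeGroup B) : cyclicNorm x ≤ (g * x * g⁻¹).norm :=
  Nat.sInf_le ⟨g, rfl⟩

lemma cyclicNorm_le_norm (x : FreeGroup B) : cyclicNorm x ≤ x.norm := by
  simpa using cyclicNorm_le x 1

lemma cyclicNorm_conj (h x : FreeGroup B) : cyclicNorm (h * x * h⁻¹) = cyclicNorm x := by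
  unfold cyclicNorm
  congr 1
  ext n
  constructor
  · rintro ⟨g, rfl⟩
    exact ⟨g * h, by group⟩
  · rintro ⟨g, rfl⟩
    exact ⟨g * h⁻¹, by group⟩

lemma exists_cyclicNorm_eq (x : FreeGroup B) :
    ∃ g : FreeGroup B, cyclicNorm x = (g * x * g⁻¹).norm := by
  have h : {n | ∃ g : FreeGroup B, n = (g * x * g⁻¹).norm}.Nonempty :=
    ⟨x.norm, 1, by simp⟩
  exact Nat.sInf_mem h

lemma norm_pow_le (x : FreeGroup B) (n : ℕ) : (x ^ n).norm ≤ n * x.norm := by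
  induction n with
  | zero => simp
  | succ n ih =>
    rw [pow_succ]
    calc (x ^ n * x).norm ≤ (x ^ n).norm + x.norm := FreeGroup.norm_mul_le _ _
    _ ≤ n * x.norm + x.norm := by omega
    _ = (n + 1) * x.norm := by ring

/-- Key combinatorial estimate: `n·‖x‖ ≤ |xⁿ| + |x|`. -/
lemma mul_cyclicNorm_le (x : FreeGroup B) (n : ℕ) :
    n * cyclicNorm x ≤ (x ^ n).norm + x.norm := by
  suffices H : ∀ m : ℕ, ∀ x : FreeGroup B, x.norm = m →
      n * cyclicNorm x ≤ (x ^ n).norm + x.norm from H x.norm x rfl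
  intro m
  induction m using Nat.strong_induction_on with
  | _ m ih =>
  intro x hm
  by_cases hcyc : List.Chain' R (x.toWord ++ x.toWord)
  · calc n * cyclicNorm x ≤ n * x.norm := Nat.mul_le_mul_left n (cyclicNorm_le_norm x)
    _ = (x ^ n).norm := (norm_pow_eq hcyc n).symm
    _ ≤ (x ^ n).norm + x.norm := Nat.le_add_right _ _
  · -- the failure must be at the junction
    set L := x.toWord with hL
    have hch : List.Chain' R L := chain'_toWord x
    change ¬ List.IsChain R (L ++ L) at hcyc
    rw [List.isChain_append] at hcyc
    push_neg at hcyc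
    obtain ⟨la, hla, hd, hhd, hnR⟩ := hcyc hch hch
    simp only [R, not_not] at hnR
    cases hLc : L with
    | nil => rw [hLc] at hhd; simp at hhd
    | cons a t =>
      have ha : hd = a := by
        rw [hLc] at hhd
        simp only [List.head?_cons, Option.mem_def, Option.some_inj] at hhd
        exact hhd.symm
      rcases List.eq_nil_or_concat t with htc | ⟨M, z, htc⟩
      · exfalso
        rw [hLc, htc] at hla
        simp only [List.getLast?_singleton, Option.mem_def, Option.some_inj] at hla
        obtain ⟨-, h2⟩ := hnR
        rw [← hla, ha] at h2
        simp at h2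
      have hLdec : L = a :: (M ++ [(a.1, !a.2)]) := by
        have hz : la = z := by
          rw [hLc, htc, List.concat_eq_append, ← List.cons_append,
            List.getLast?_concat] at hla
          exact (by simpa using hla : z = la).symm
        have hz2 : z = (a.1, !a.2) := by
          rw [← hz]; cases la; cases a
          rw [ha] at hnR
          simp_all
        rw [hLc, htc, hz2, List.concat_eq_append]
      set g : FreeGroup B := FreeGroup.mk [a] with hg
      set y : FreeGroup B := FreeGroup.mk M with hy
      have hginv : g⁻¹ = FreeGroup.mk [(a.1, !a.2)] := by
        rw [hg, FreeGroup.inv_mk]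
        congr 1
      have hxdec : x = g * y * g⁻¹ := by
        rw [hg, hy, hginv, FreeGroup.mul_mk, FreeGroup.mul_mk]
        conv_lhs => rw [← FreeGroup.mk_toWord (x := x), ← hL, hLdec]
        congr 1
      have hnormg : g.norm ≤ 1 := FreeGroup.norm_mk_le
      have hnormy : y.norm ≤ M.length := FreeGroup.norm_mk_le
      have hnormx : x.norm = M.length + 2 := by
        have hxl : x.norm = L.length := by rw [FreeGroup.norm, hL]
        rw [hxl, hLdec]
        simp
      have hlt : y.norm < x.norm := by omega
      have hcy : cyclicNorm x = cyclicNorm y := by rw [hxdec, cyclicNorm_conj]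
      have hyx : y = g⁻¹ * x * (g⁻¹)⁻¹ := by rw [inv_inv, hxdec]; group
      have hpow : (y ^ n).norm ≤ (x ^ n).norm + 2 := by
        have hyn : y ^ n = g⁻¹ * x ^ n * (g⁻¹)⁻¹ := by rw [hyx, conj_pow]
        rw [inv_inv] at hyn
        calc (y ^ n).norm = (g⁻¹ * x ^ n * g).norm := by rw [hyn]
        _ ≤ (g⁻¹ * x ^ n).norm + g.norm := FreeGroup.norm_mul_le _ _
        _ ≤ g⁻¹.norm + (x ^ n).norm + g.norm := by
            have := FreeGroup.norm_mul_le g⁻¹ (x ^ n); omega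
        _ ≤ (x ^ n).norm + 2 := by
            have : g⁻¹.norm = g.norm := FreeGroup.norm_inv_eq
            omega
      have hih := ih y.norm (hm ▸ hlt) y rfl
      calc n * cyclicNorm x = n * cyclicNorm y := by rw [hcy]
      _ ≤ (y ^ n).norm + y.norm := hih
      _ ≤ (x ^ n).norm + 2 + (x.norm - 2) := by omega
      _ ≤ (x ^ n).norm + x.norm := by omega

end Stmt11Aux

open Stmt11Aux

/-- If Brinkmann's based estimate `|φ^i(w)| ≤ K(|w| + |φ^N(w)|)` holds for all
`0 ≤ i ≤ N` and all `w`, then the analogous estimate holds for cyclic lengths with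
some constant `K'`. -/
theorem stmt11 (B : Type) [Fintype B] [DecidableEq B] (φ : MulAut (FreeGroup B)) (K : ℕ)
    (hK : ∀ N i : ℕ, i ≤ N → ∀ w : FreeGroup B,
      ((φ ^ i) w).norm ≤ K * (w.norm + ((φ ^ N) w).norm)) :
    ∃ K' : ℕ, ∀ N i : ℕ, i ≤ N → ∀ w : FreeGroup B,
      cyclicNorm ((φ ^ i) w) ≤ K' * (cyclicNorm w + cyclicNorm ((φ ^ N) w)) := by
  refine ⟨K, fun N i hi w => ?_⟩
  obtain ⟨a, ha⟩ := exists_cyclicNorm_eq w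
  obtain ⟨b, hb⟩ := exists_cyclicNorm_eq ((φ ^ N) w)
  set w₀ : FreeGroup B := a * w * a⁻¹ with hw₀
  set u₀ : FreeGroup B := b * (φ ^ N) w * b⁻¹ with hu₀
  set c : FreeGroup B := (φ ^ N) a * b⁻¹ with hc
  have hconj : (φ ^ N) w₀ = c * u₀ * c⁻¹ := by
    rw [hw₀, hu₀, hc]
    simp only [map_mul, map_inv]
    group
  set T : ℕ := K * (cyclicNorm w + cyclicNorm ((φ ^ N) w)) with hT
  set C : ℕ := 2 * K * c.norm + ((φ ^ i) w₀).norm with hC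
  have key : ∀ n : ℕ, n * cyclicNorm ((φ ^ i) w) ≤ n * T + C := by
    intro n
    have h0 : cyclicNorm ((φ ^ i) w) = cyclicNorm ((φ ^ i) w₀) := by
      rw [hw₀]
      simp only [map_mul, map_inv]
      rw [cyclicNorm_conj]
    have h1 : n * cyclicNorm ((φ ^ i) w₀) ≤ (((φ ^ i) w₀) ^ n).norm + ((φ ^ i) w₀).norm :=
      mul_cyclicNorm_le _ n
    have h2 : (((φ ^ i) w₀) ^ n).norm ≤ K * ((w₀ ^ n).norm + ((φ ^ N) (w₀ ^ n)).norm) := by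
      rw [← map_pow]
      exact hK N i hi (w₀ ^ n)
    have h3 : (w₀ ^ n).norm ≤ n * cyclicNorm w := by
      calc (w₀ ^ n).norm ≤ n * w₀.norm := norm_pow_le _ _
      _ = n * cyclicNorm w := by rw [ha]
    have h4 : ((φ ^ N) (w₀ ^ n)).norm ≤ n * cyclicNorm ((φ ^ N) w) + 2 * c.norm := by
      rw [map_pow, hconj, conj_pow]
      calc (c * u₀ ^ n * c⁻¹).norm ≤ (c * u₀ ^ n).norm + c⁻¹.norm := FreeGroup.norm_mul_le _ _
      _ ≤ c.norm + (u₀ ^ n).norm + c⁻¹.norm := by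
          have := FreeGroup.norm_mul_le c (u₀ ^ n); omega
      _ ≤ c.norm + n * u₀.norm + c.norm := by
          have h5 := norm_pow_le u₀ n
          have h6 : c⁻¹.norm = c.norm := FreeGroup.norm_inv_eq
          omega
      _ = n * cyclicNorm ((φ ^ N) w) + 2 * c.norm := by rw [hb]; ring
    calc n * cyclicNorm ((φ ^ i) w) = n * cyclicNorm ((φ ^ i) w₀) := by rw [h0]
    _ ≤ (((φ ^ i) w₀) ^ n).norm + ((φ ^ i) w₀).norm := h1
    _ ≤ K * ((w₀ ^ n).norm + ((φ ^ N) (w₀ ^ n)).norm) + ((φ ^ i) w₀).norm := by omega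
    _ ≤ K * (n * cyclicNorm w + (n * cyclicNorm ((φ ^ N) w) + 2 * c.norm))
          + ((φ ^ i) w₀).norm := by
        have := Nat.mul_le_mul_left K (Nat.add_le_add h3 h4); omega
    _ = n * T + C := by rw [hT, hC]; ring
  -- conclude from the linear bound holding for all n
  by_contra hcon
  push_neg at hcon
  have hA : T + 1 ≤ cyclicNorm ((φ ^ i) w) := hcon
  have := key (C + 1)
  nlinarith [Nat.mul_le_mul_left (C + 1) hA]
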